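/- Let R ∈ ℝ^{n×n} and S ∈ ℝ^{r×r} be matrices such that R and −S have no common eigenvalues. Let U solve RU + US + K = 0 and V solve SV + VR + L = 0 for given K ∈ ℝ^{n×r} and L ∈ ℝ^{r×n}. Then trace(KV) = trace(LU). -/
import Mathlib

open Matrix

theorem stmt0 {n r : ℕ} (R : Matrix (Fin n) (Fin n) ℝ) (S : Matrix (Fin r) (Fin r) ℝ)
    (K : Matrix (Fin n) (Fin r) ℝ) (L : Matrix (Fin r) (Fin n) ℝ)
    (U : Matrix (Fin n) (Fin r) ℝ) (V : Matrix (Fin r) (Fin n) ℝ)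
    (hspec : ∀ μ : ℂ, μ ∈ spectrum ℂ (R.map Complex.ofReal) →
      μ ∉ spectrum ℂ ((-S).map Complex.ofReal))
    (hU : R * U + U * S + K = 0)
    (hV : S * V + V * R + L = 0) :
    Matrix.trace (K * V) = Matrix.trace (L * U) := by
  have hK : K = -(R * U + U * S) := eq_neg_of_add_eq_zero_right hU
  have hL : L = -(S * V + V * R) := eq_neg_of_add_eq_zero_right hV
  rw [hK, hL, Matrix.neg_mul, Matrix.neg_mul, Matrix.add_mul, Matrix.add_mul, trace_neg,
    trace_neg, trace_add, trace_add, Matrix.mul_assoc, Matrix.mul_assoc, Matrix.mul_assoc,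
    Matrix.mul_assoc, Matrix.trace_mul_comm R (U * V), Matrix.mul_assoc,
    Matrix.trace_mul_comm U (V * R), Matrix.mul_assoc, Matrix.trace_mul_comm U (S * V),
    Matrix.mul_assoc, add_comm]
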